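/- arXiv:1310.2673 — 2 statements merged into one kernel-verified Lean document; each statement's English description precedes it below -/
import Mathlib

section
/- Let c > 0 and let Σ = Ω × ℝ where Ω ⊂ ℝ^{n-1} is a bounded domain. If S ⊂ Σ is measurable with ∫_S e^{cz} dx < ∞, then the exponentially weighted perimeter satisfies Per_c(S, Σ) ≥ c ∫_S e^{cz} dx, where Per_c(S, Σ) = sup { ∫_S e^{cz}(div φ + c ẑ·φ) dx : φ ∈ C¹_c(Σ; ℝⁿ), |φ| ≤ 1 }. -/
open MeasureTheory Set Real
open scoped ENNReal
open scoped Manifold ContDiff Topology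
open Filter

section Aux

lemma smoothUrysohn {E : Type*} [NormedAddCommGroup E] [NormedSpace ℝ E]
    [FiniteDimensional ℝ E] {K U : Set E} (hK : IsCompact K) (hU : IsOpen U)
    (hKU : K ⊆ U) :
    ∃ ρ : E → ℝ, ContDiff ℝ ∞ ρ ∧ HasCompactSupport ρ ∧ tsupport ρ ⊆ U ∧
      EqOn ρ 1 K ∧ ∀ x, ρ x ∈ Icc (0:ℝ) 1 := by
  obtain ⟨L, hL, hKL, hLU⟩ := exists_compact_between hK hU hKU
  obtain ⟨f, hf0, hf1, hf01⟩ := exists_contMDiffMap_zero_one_of_isClosed (n := ⊤)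
    (𝓘(ℝ, E)) isOpen_interior.isClosed_compl hK.isClosed
    (disjoint_compl_left_iff.mpr hKL)
  have hsupp : Function.support (f : E → ℝ) ⊆ interior L := by
    intro x hx
    by_contra hxL
    exact hx (hf0 hxL)
  have htsupp : tsupport (f : E → ℝ) ⊆ L :=
    (closure_mono hsupp).trans (closure_minimal interior_subset hL.isClosed)
  refine ⟨f, ?_, ?_, htsupp.trans hLU, hf1, hf01⟩
  · exact (f.contMDiff).contDiff
  · exact HasCompactSupport.of_support_subset_isCompact hL (hsupp.trans interior_subset)

lemma theta_hasDerivAt (t : ℝ) :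
    HasDerivAt Real.smoothTransition (deriv Real.smoothTransition t) t :=
  ((Real.smoothTransition.contDiff (n := 1)).differentiable one_ne_zero t).hasDerivAt

lemma theta_deriv_zero_of_neg {t : ℝ} (h : t < 0) : deriv Real.smoothTransition t = 0 := by
  have : Real.smoothTransition =ᶠ[nhds t] fun _ => (0:ℝ) :=
    Filter.eventuallyEq_of_mem (Iio_mem_nhds h) fun z hz =>
      Real.smoothTransition.zero_of_nonpos (le_of_lt hz)
  rw [this.deriv_eq, deriv_const]

lemma theta_deriv_zero_of_gt {t : ℝ} (h : 1 < t) : deriv Real.smoothTransition t = 0 := by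
  have : Real.smoothTransition =ᶠ[nhds t] fun _ => (1:ℝ) :=
    Filter.eventuallyEq_of_mem (Ioi_mem_nhds h) fun z hz =>
      Real.smoothTransition.one_of_one_le (le_of_lt hz)
  rw [this.deriv_eq, deriv_const]

lemma theta_contDeriv : Continuous (deriv Real.smoothTransition) :=
  (Real.smoothTransition.contDiff (n := 2)).continuous_deriv (by norm_num)

lemma theta_deriv_bound : ∃ M : ℝ, 0 ≤ M ∧ ∀ t, |deriv Real.smoothTransition t| ≤ M := by
  obtain ⟨t₀, _, hmax⟩ := (isCompact_Icc (a := (0:ℝ)) (b := 1)).exists_isMaxOn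
    (nonempty_Icc.2 zero_le_one) (theta_contDeriv.abs.continuousOn)
  refine ⟨|deriv Real.smoothTransition t₀|, abs_nonneg _, fun t => ?_⟩
  rcases le_or_gt t 1 with h1 | h1
  · rcases lt_or_ge t 0 with h0 | h0
    · rw [theta_deriv_zero_of_neg h0]; simp [abs_nonneg]
    · exact hmax ⟨h0, h1⟩
  · rw [theta_deriv_zero_of_gt h1]; simp [abs_nonneg]

noncomputable def chiA (n : ℕ) (z : ℝ) : ℝ :=
  Real.smoothTransition (z + (n+1)) * Real.smoothTransition ((n+1 : ℝ) - z)

noncomputable def chiA' (n : ℕ) (z : ℝ) : ℝ :=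
  deriv Real.smoothTransition (z + (n+1)) * Real.smoothTransition ((n+1 : ℝ) - z)
    - Real.smoothTransition (z + (n+1)) * deriv Real.smoothTransition ((n+1 : ℝ) - z)

lemma chiA_hasDerivAt (n : ℕ) (z : ℝ) : HasDerivAt (chiA n) (chiA' n z) z := by
  have h1 : HasDerivAt (fun z : ℝ => Real.smoothTransition (z + (n+1)))
      (deriv Real.smoothTransition (z + (n+1))) z := by
    simpa [Function.comp_def] using (theta_hasDerivAt (z + (n+1))).comp z ((hasDerivAt_id z).add_const _)
  have h2 : HasDerivAt (fun z : ℝ => Real.smoothTransition ((n+1 : ℝ) - z))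
      (-deriv Real.smoothTransition ((n+1 : ℝ) - z)) z := by
    simpa [Function.comp_def] using (theta_hasDerivAt ((n+1 : ℝ) - z)).comp z ((hasDerivAt_id z).const_sub _)
  have := h1.mul h2
  refine this.congr_deriv ?_
  unfold chiA'
  ring

lemma chiA_contDiff (n : ℕ) : ContDiff ℝ ∞ (chiA n) := by
  apply ContDiff.mul
  · exact Real.smoothTransition.contDiff.comp (contDiff_id.add contDiff_const)
  · exact Real.smoothTransition.contDiff.comp (contDiff_const.sub contDiff_id)

lemma chiA_continuous (n : ℕ) : Continuous (chiA n) := (chiA_contDiff n).continuous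

lemma chiA'_continuous (n : ℕ) : Continuous (chiA' n) := by
  unfold chiA'
  exact ((theta_contDeriv.comp (continuous_id.add continuous_const)).mul
    (Real.smoothTransition.continuous.comp (continuous_const.sub continuous_id))).sub
    ((Real.smoothTransition.continuous.comp (continuous_id.add continuous_const)).mul
      (theta_contDeriv.comp (continuous_const.sub continuous_id)))

lemma chiA_mem_Icc (n : ℕ) (z : ℝ) : chiA n z ∈ Icc (0:ℝ) 1 :=
  ⟨mul_nonneg (Real.smoothTransition.nonneg _) (Real.smoothTransition.nonneg _),
    mul_le_one₀ (Real.smoothTransition.le_one _) (Real.smoothTransition.nonneg _)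
      (Real.smoothTransition.le_one _)⟩

lemma chiA_one {n : ℕ} {z : ℝ} (h : |z| ≤ n) : chiA n z = 1 := by
  rw [abs_le] at h
  unfold chiA
  rw [Real.smoothTransition.one_of_one_le (by linarith [h.1]),
    Real.smoothTransition.one_of_one_le (by linarith [h.2]), mul_one]

lemma chiA_zero {n : ℕ} {z : ℝ} (h : (n+1 : ℝ) < |z|) : chiA n z = 0 := by
  rcases lt_abs.mp h with h' | h'
  · unfold chiA
    rw [Real.smoothTransition.zero_of_nonpos (by linarith : (n+1:ℝ) - z ≤ 0), mul_zero]
  · unfold chiA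
    rw [Real.smoothTransition.zero_of_nonpos (by linarith : z + (n+1:ℝ) ≤ 0), zero_mul]

lemma chiA'_zero {n : ℕ} {z : ℝ} (h : |z| < n) : chiA' n z = 0 := by
  rw [abs_lt] at h
  unfold chiA'
  rw [theta_deriv_zero_of_gt (by linarith [h.1] : (1:ℝ) < z + (n+1)),
    theta_deriv_zero_of_gt (by linarith [h.2] : (1:ℝ) < (n+1:ℝ) - z)]
  ring

lemma chiA'_bound {M : ℝ} (hM : ∀ t, |deriv Real.smoothTransition t| ≤ M) (n : ℕ) (z : ℝ) :
    |chiA' n z| ≤ 2 * M := by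
  have hM0 : 0 ≤ M := (abs_nonneg _).trans (hM 0)
  have h1 := hM (z + (n+1))
  have h2 := hM ((n+1 : ℝ) - z)
  have b1 := Real.smoothTransition.nonneg ((n+1:ℝ) - z)
  have b2 := Real.smoothTransition.le_one ((n+1:ℝ) - z)
  have b3 := Real.smoothTransition.nonneg (z + (n+1:ℝ))
  have b4 := Real.smoothTransition.le_one (z + (n+1:ℝ))
  have e1 : |deriv Real.smoothTransition (z + (n+1)) * Real.smoothTransition ((n+1 : ℝ) - z)|
      ≤ M := by
    rw [abs_mul, abs_of_nonneg b1]
    calc |deriv Real.smoothTransition (z + (n+1))| * Real.smoothTransition ((n+1:ℝ) - z)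
        ≤ M * 1 := mul_le_mul h1 b2 b1 hM0
      _ = M := mul_one M
  have e2 : |Real.smoothTransition (z + (n+1)) * deriv Real.smoothTransition ((n+1 : ℝ) - z)|
      ≤ M := by
    rw [abs_mul, abs_of_nonneg b3]
    calc Real.smoothTransition (z + (n+1:ℝ)) * |deriv Real.smoothTransition ((n+1:ℝ) - z)|
        ≤ 1 * M := mul_le_mul b4 h2 (abs_nonneg _) zero_le_one
      _ = M := one_mul M
  calc |chiA' n z|
      ≤ |deriv Real.smoothTransition (z + (n+1)) * Real.smoothTransition ((n+1 : ℝ) - z)|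
        + |Real.smoothTransition (z + (n+1)) * deriv Real.smoothTransition ((n+1 : ℝ) - z)| :=
        abs_sub _ _
    _ ≤ M + M := add_le_add e1 e2
    _ = 2 * M := by ring

lemma phi_hasFDerivAt {m : ℕ} (ρ : EuclideanSpace ℝ (Fin m) → ℝ) (hρ : Differentiable ℝ ρ)
    (n : ℕ) (x : EuclideanSpace ℝ (Fin m) × ℝ) :
    HasFDerivAt (fun p : EuclideanSpace ℝ (Fin m) × ℝ =>
        ((0 : EuclideanSpace ℝ (Fin m)), ρ p.1 * chiA n p.2))
      ((0 : (EuclideanSpace ℝ (Fin m) × ℝ) →L[ℝ] EuclideanSpace ℝ (Fin m)).prod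
        ((ρ x.1 • ((ContinuousLinearMap.smulRight (1 : ℝ →L[ℝ] ℝ) (chiA' n x.2)).comp
            (ContinuousLinearMap.snd ℝ (EuclideanSpace ℝ (Fin m)) ℝ)))
          + (chiA n x.2 • ((fderiv ℝ ρ x.1).comp
            (ContinuousLinearMap.fst ℝ (EuclideanSpace ℝ (Fin m)) ℝ))))) x := by
  have h1 : HasFDerivAt (fun p : EuclideanSpace ℝ (Fin m) × ℝ => ρ p.1)
      ((fderiv ℝ ρ x.1).comp (ContinuousLinearMap.fst ℝ (EuclideanSpace ℝ (Fin m)) ℝ)) x :=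
    ((hρ x.1).hasFDerivAt).comp x (hasFDerivAt_fst)
  have h2 : HasFDerivAt (fun p : EuclideanSpace ℝ (Fin m) × ℝ => chiA n p.2)
      ((ContinuousLinearMap.smulRight (1 : ℝ →L[ℝ] ℝ) (chiA' n x.2)).comp
        (ContinuousLinearMap.snd ℝ (EuclideanSpace ℝ (Fin m)) ℝ)) x :=
    ((chiA_hasDerivAt n x.2).hasFDerivAt).comp x (hasFDerivAt_snd)
  exact HasFDerivAt.prodMk (hasFDerivAt_const _ x) (h1.mul h2)

lemma phi_eval {m : ℕ} (ρ : EuclideanSpace ℝ (Fin m) → ℝ) (hρ : Differentiable ℝ ρ)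
    (n : ℕ) (x : EuclideanSpace ℝ (Fin m) × ℝ) :
    ((∑ i : Fin m, (fderiv ℝ (fun p : EuclideanSpace ℝ (Fin m) × ℝ =>
        ((0 : EuclideanSpace ℝ (Fin m)), ρ p.1 * chiA n p.2)) x
        ((EuclideanSpace.single i (1:ℝ)), (0:ℝ))).1 i)
      + (fderiv ℝ (fun p : EuclideanSpace ℝ (Fin m) × ℝ =>
        ((0 : EuclideanSpace ℝ (Fin m)), ρ p.1 * chiA n p.2)) x (0, (1:ℝ))).2)
      = ρ x.1 * chiA' n x.2 := by
  rw [(phi_hasFDerivAt ρ hρ n x).fderiv]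
  simp

end Aux

/-- The exponentially weighted perimeter `Per_c(S, Σ)` of a set `S` relative to a
cylinder-like set `Sig`, defined as the supremum of
`∫_S e^{cz} (div φ + c ẑ·φ) dx` over `C¹` vector fields `φ` with compact support
contained in `Sig` and `|φ| ≤ 1`. -/
noncomputable def perC {m : ℕ} (c : ℝ)
    (Sig S : Set (EuclideanSpace ℝ (Fin m) × ℝ)) : ℝ≥0∞ :=
  ⨆ φ : {φ : EuclideanSpace ℝ (Fin m) × ℝ → EuclideanSpace ℝ (Fin m) × ℝ //
      ContDiff ℝ 1 φ ∧ HasCompactSupport φ ∧ tsupport φ ⊆ Sig ∧ ∀ x, ‖φ x‖ ≤ 1},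
    ENNReal.ofReal (∫ x in S, Real.exp (c * x.2) *
      (((∑ i : Fin m, (fderiv ℝ φ.1 x ((EuclideanSpace.single i (1:ℝ)), (0:ℝ))).1 i)
          + (fderiv ℝ φ.1 x (0, (1:ℝ))).2)
        + c * (φ.1 x).2))

/-- If `c > 0`, `Ω ⊂ ℝ^{n-1}` is a bounded domain, `Σ = Ω × ℝ`, and
`S ⊆ Σ` is measurable with `∫_S e^{cz} dx < ∞`, then
`Per_c(S, Σ) ≥ c ∫_S e^{cz} dx`. -/
theorem weighted_perimeter_lower_bound {m : ℕ} (c : ℝ) (hc : 0 < c)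
    (Ω : Set (EuclideanSpace ℝ (Fin m))) (hΩo : IsOpen Ω) (hΩne : Ω.Nonempty)
    (hΩb : Bornology.IsBounded Ω)
    (S : Set (EuclideanSpace ℝ (Fin m) × ℝ)) (hS : MeasurableSet S)
    (hSsub : S ⊆ Ω ×ˢ (univ : Set ℝ))
    (hint : IntegrableOn (fun x => Real.exp (c * x.2)) S) :
    ENNReal.ofReal (c * ∫ x in S, Real.exp (c * x.2))
      ≤ perC c (Ω ×ˢ (univ : Set ℝ)) S := by
  classical
  obtain ⟨M, hM0, hMb⟩ := theta_deriv_bound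
  -- the compact exhaustion of Ω
  set K : ℕ → Set (EuclideanSpace ℝ (Fin m)) := fun n =>
    Metric.closedBall 0 n \ Metric.thickening (1/(n+1)) Ωᶜ with hKdef
  have hKc : ∀ n, IsCompact (K n) := by
    intro n
    rw [hKdef]
    simp only [Set.diff_eq]
    exact (isCompact_closedBall _ _).inter_right Metric.isOpen_thickening.isClosed_compl
  have hKΩ : ∀ n, K n ⊆ Ω := by
    intro n y hy
    by_contra hyΩ
    exact hy.2 (Metric.self_subset_thickening (by positivity) Ωᶜ hyΩ)
  -- the cutoff functions in the Ω direction
  have hρex : ∀ n : ℕ, ∃ ρ : EuclideanSpace ℝ (Fin m) → ℝ, ContDiff ℝ ∞ ρ ∧ HasCompactSupport ρ ∧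
      tsupport ρ ⊆ Ω ∧ EqOn ρ 1 (K n) ∧ ∀ x, ρ x ∈ Icc (0:ℝ) 1 :=
    fun n => smoothUrysohn (hKc n) hΩo (hKΩ n)
  choose ρ hρsm hρcs hρts hρone hρIcc using hρex
  have hρdiff : ∀ n, Differentiable ℝ (ρ n) := fun n =>
    (hρsm n).differentiable (by simp)
  -- the vector fields
  set φ : ℕ → (EuclideanSpace ℝ (Fin m) × ℝ) → EuclideanSpace ℝ (Fin m) × ℝ :=
    fun n p => ((0 : EuclideanSpace ℝ (Fin m)), ρ n p.1 * chiA n p.2) with hφdef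
  have hφsm : ∀ n, ContDiff ℝ 1 (φ n) := by
    intro n
    apply ContDiff.prodMk contDiff_const
    exact (((hρsm n).comp contDiff_fst).mul ((chiA_contDiff n).comp contDiff_snd)).of_le
      (by exact_mod_cast le_top)
  have hφsupp : ∀ n, Function.support (φ n) ⊆
      (tsupport (ρ n)) ×ˢ (Icc (-(n+1:ℝ)) (n+1)) := by
    intro n p hp
    have h2 : ρ n p.1 * chiA n p.2 ≠ 0 := by
      intro h0
      apply hp
      rw [hφdef]
      simp [h0]
    constructor
    · apply subset_tsupport
      intro h0
      exact h2 (by rw [h0, zero_mul])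
    · have : chiA n p.2 ≠ 0 := fun h0 => h2 (by rw [h0, mul_zero])
      have hle : |p.2| ≤ (n+1:ℝ) := by
        by_contra hgt
        exact this (chiA_zero (lt_of_not_ge hgt))
      exact abs_le.mp hle
  have hφcs : ∀ n, HasCompactSupport (φ n) := fun n =>
    HasCompactSupport.of_support_subset_isCompact ((hρcs n).prod isCompact_Icc) (hφsupp n)
  have hφts : ∀ n, tsupport (φ n) ⊆ Ω ×ˢ (univ : Set ℝ) := by
    intro n
    have h1 : tsupport (φ n) ⊆ (tsupport (ρ n)) ×ˢ (Icc (-(n+1:ℝ)) (n+1)) :=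
      closure_minimal (hφsupp n) ((isClosed_tsupport _).prod isClosed_Icc)
    exact h1.trans (Set.prod_mono (hρts n) (subset_univ _))
  have hφnorm : ∀ n x, ‖φ n x‖ ≤ 1 := by
    intro n x
    have h1 := (hρIcc n x.1)
    have h2 := chiA_mem_Icc n x.2
    have : ‖φ n x‖ = max ‖(0:EuclideanSpace ℝ (Fin m))‖ ‖ρ n x.1 * chiA n x.2‖ := rfl
    rw [this, norm_zero]
    refine max_le zero_le_one ?_
    rw [Real.norm_eq_abs, abs_mul, abs_of_nonneg h1.1, abs_of_nonneg h2.1]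
    exact mul_le_one₀ h1.2 h2.1 h2.2
  -- the integrands
  set F : ℕ → (EuclideanSpace ℝ (Fin m) × ℝ) → ℝ := fun n x =>
    Real.exp (c * x.2) * (ρ n x.1 * chiA' n x.2 + c * (ρ n x.1 * chiA n x.2)) with hFdef
  -- dominated convergence
  have hTend : Tendsto (fun n => ∫ x in S, F n x) atTop
      (𝓝 (∫ x in S, c * Real.exp (c * x.2))) := by
    apply tendsto_integral_of_dominated_convergence
      (bound := fun x => Real.exp (c * x.2) * (2 * M + c))
    · intro n
      apply Continuous.aestronglyMeasurable
      exact (Real.continuous_exp.comp (continuous_const.mul continuous_snd)).mul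
        ((((hρsm n).continuous.comp continuous_fst).mul
            ((chiA'_continuous n).comp continuous_snd)).add
          (continuous_const.mul (((hρsm n).continuous.comp continuous_fst).mul
            ((chiA_continuous n).comp continuous_snd))))
    · exact hint.mul_const _
    · intro n
      refine Filter.Eventually.of_forall fun x => ?_
      have h1 := hρIcc n x.1
      have h2 := chiA_mem_Icc n x.2
      have h3 := chiA'_bound hMb n x.2
      have key : |ρ n x.1 * chiA' n x.2 + c * (ρ n x.1 * chiA n x.2)| ≤ 2 * M + c := by
        refine (abs_add_le _ _).trans (add_le_add ?_ ?_)
        · rw [abs_mul, abs_of_nonneg h1.1]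
          nlinarith [h1.1, h1.2, h3, abs_nonneg (chiA' n x.2)]
        · rw [abs_mul, abs_of_pos hc, abs_mul, abs_of_nonneg h1.1, abs_of_nonneg h2.1]
          nlinarith [mul_le_one₀ h1.2 h2.1 h2.2, mul_nonneg h1.1 h2.1]
      simp only [hFdef, Real.norm_eq_abs, abs_mul, Real.abs_exp]
      exact mul_le_mul_of_nonneg_left key (Real.exp_pos _).le
    · rw [MeasureTheory.ae_restrict_iff' hS]
      refine Filter.Eventually.of_forall fun x hx => ?_
      have hx1 : x.1 ∈ Ω := (hSsub hx).1
      obtain ⟨ε, hε, hball⟩ := Metric.isOpen_iff.mp hΩo x.1 hx1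
      have e1 : ∀ᶠ n : ℕ in atTop, ‖x.1‖ ≤ (n:ℝ) :=
        tendsto_natCast_atTop_atTop.eventually_ge_atTop ‖x.1‖
      have e2 : ∀ᶠ n : ℕ in atTop, |x.2| < (n:ℝ) :=
        tendsto_natCast_atTop_atTop.eventually_gt_atTop |x.2|
      have e3 : ∀ᶠ n : ℕ in atTop, 1/((n:ℝ)+1) < ε := by
        have : Tendsto (fun n : ℕ => 1/((n:ℝ)+1)) atTop (𝓝 0) :=
          tendsto_one_div_add_atTop_nhds_zero_nat
        exact this.eventually_lt_const hε
      have heq : ∀ᶠ n : ℕ in atTop, F n x = c * Real.exp (c * x.2) := by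
        filter_upwards [e1, e2, e3] with n h1 h2 h3
        have hxK : x.1 ∈ K n := by
          constructor
          · rw [Metric.mem_closedBall, dist_zero_right]; exact h1
          · intro hmem
            obtain ⟨z, hz, hdz⟩ := Metric.mem_thickening_iff.mp hmem
            exact hz (hball (by rw [Metric.mem_ball, dist_comm]; exact hdz.trans h3))
        have hρ1 : ρ n x.1 = 1 := hρone n hxK
        have hχ1 : chiA n x.2 = 1 := chiA_one h2.le
        have hχ'0 : chiA' n x.2 = 0 := chiA'_zero h2
        simp only [hFdef, hρ1, hχ1, hχ'0]
        ring
      exact Filter.Tendsto.congr' (Filter.EventuallyEq.symm heq) tendsto_const_nhds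
  -- each F n gives a lower bound for the perimeter
  have hle : ∀ n, ENNReal.ofReal (∫ x in S, F n x) ≤ perC c (Ω ×ˢ (univ : Set ℝ)) S := by
    intro n
    rw [perC]
    refine le_iSup_of_le ⟨φ n, hφsm n, hφcs n, hφts n, hφnorm n⟩ (le_of_eq ?_)
    congr 1
    apply MeasureTheory.integral_congr_ae
    refine Filter.Eventually.of_forall fun x => ?_
    have h := phi_eval (ρ n) (hρdiff n) n x
    simp only [hFdef, hφdef]
    rw [h]
  -- conclude
  have hTend2 : Tendsto (fun n => ENNReal.ofReal (∫ x in S, F n x)) atTop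
      (𝓝 (ENNReal.ofReal (c * ∫ x in S, Real.exp (c * x.2)))) := by
    have : (∫ x in S, c * Real.exp (c * x.2)) = c * ∫ x in S, Real.exp (c * x.2) :=
      MeasureTheory.integral_const_mul c _
    rw [← this]
    exact (ENNReal.continuous_ofReal.tendsto _).comp hTend
  exact le_of_tendsto hTend2 (Filter.Eventually.of_forall hle)
end

section
/- Let c > 0 and let S ⊂ Σ = Ω × ℝ satisfy 0 < ∫_S e^{cz} dx < ∞. Define ψ : Ω → [−∞, ∞) by ψ(y) := (1/c) ln( c ∫_{S^y} e^{cz} dz ), where S^y = { z : (y,z) ∈ S }, and let S_ψ := { (y,z) : z < ψ(y) }. Then ∫_{S_ψ} e^{cz} dx = ∫_S e^{cz} dx, and for every bounded measurable g : Ω → ℝ, ∫_{S_ψ} e^{cz} g(y) dx = ∫_S e^{cz} g(y) dx. -/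
open MeasureTheory Set Real
open scoped Classical

/-- The weighted length of the fiber `S^y = { z : (y,z) ∈ S }`:
`I(y) = ∫_{S^y} e^{cz} dz = (1/c) e^{cψ(y)}`, where `ψ` is the rearrangement profile
`ψ(y) = (1/c) ln(c I(y))` (with `ln 0 = −∞`). -/
lemma exp_mul_indicator_key {c : ℝ} (hc : 0 < c) (t : ℝ) :
    (fun x => (Iio (c * t)).indicator Real.exp (c * x))
      = (Iio t).indicator fun z => Real.exp (c * z) := by
  funext x
  by_cases hx : x < t
  · rw [indicator_of_mem (show c * x ∈ Iio (c * t) from (mul_lt_mul_iff_right₀ hc).2 hx),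
      indicator_of_mem (show x ∈ Iio t from hx)]
  · rw [indicator_of_notMem (show c * x ∉ Iio (c * t) from
      fun h => hx ((mul_lt_mul_iff_right₀ hc).1 h)), indicator_of_notMem (show x ∉ Iio t from hx)]

lemma exp_mul_integrableOn_Iio {c : ℝ} (hc : 0 < c) (t : ℝ) :
    IntegrableOn (fun z => Real.exp (c * z)) (Iio t) := by
  have h1 : IntegrableOn Real.exp (Iio (c * t)) :=
    (integrableOn_exp_Iic (c * t)).mono_set Iio_subset_Iic_self
  have h2 : Integrable ((Iio (c * t)).indicator Real.exp) :=
    (integrable_indicator_iff measurableSet_Iio).2 h1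
  have h3 := h2.comp_mul_left' hc.ne'
  rw [exp_mul_indicator_key hc t] at h3
  exact (integrable_indicator_iff measurableSet_Iio).1 h3

lemma integral_exp_mul_Iio {c : ℝ} (hc : 0 < c) (t : ℝ) :
    ∫ z in Iio t, Real.exp (c * z) = Real.exp (c * t) / c := by
  rw [← integral_indicator measurableSet_Iio, ← exp_mul_indicator_key hc t,
    Measure.integral_comp_mul_left ((Iio (c * t)).indicator Real.exp) c,
    integral_indicator measurableSet_Iio,
    setIntegral_congr_set Iio_ae_eq_Iic, integral_exp_Iic,
    abs_of_pos (inv_pos.2 hc), smul_eq_mul, mul_comm, div_eq_mul_inv]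

noncomputable def fiberWeight {m : ℕ} (c : ℝ)
    (S : Set (EuclideanSpace ℝ (Fin m) × ℝ)) (y : EuclideanSpace ℝ (Fin m)) : ℝ :=
  ∫ z in {z : ℝ | (y, z) ∈ S}, Real.exp (c * z)

/-- The exponential rearrangement `S_ψ = {(y,z) : z < ψ(y)}` of `S`, written via the
equivalent condition `e^{cz} < c I(y)`, which correctly encodes the convention
`ψ(y) = −∞` on empty fibers. -/
def rearr {m : ℕ} (c : ℝ) (Ω : Set (EuclideanSpace ℝ (Fin m)))
    (S : Set (EuclideanSpace ℝ (Fin m) × ℝ)) : Set (EuclideanSpace ℝ (Fin m) × ℝ) :=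
  {p | p.1 ∈ Ω ∧ Real.exp (c * p.2) < c * fiberWeight c S p.1}


lemma fiberWeight_nonneg {m : ℕ} (c : ℝ) (S : Set (EuclideanSpace ℝ (Fin m) × ℝ))
    (y : EuclideanSpace ℝ (Fin m)) : 0 ≤ fiberWeight c S y :=
  integral_nonneg fun _ => (Real.exp_pos _).le

/-- fiber of rearr: either an `Iio` or empty -/
lemma rearr_fiber_eq {m : ℕ} {c : ℝ} (hc : 0 < c) (Ω : Set (EuclideanSpace ℝ (Fin m)))
    (S : Set (EuclideanSpace ℝ (Fin m) × ℝ)) (y : EuclideanSpace ℝ (Fin m)) :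
    {z : ℝ | (y, z) ∈ rearr c Ω S}
      = if y ∈ Ω ∧ 0 < c * fiberWeight c S y
        then Iio (Real.log (c * fiberWeight c S y) / c) else ∅ := by
  by_cases h : y ∈ Ω ∧ 0 < c * fiberWeight c S y
  · rw [if_pos h]
    ext z
    simp only [rearr, mem_setOf_eq, mem_Iio]
    constructor
    · rintro ⟨-, hlt⟩
      rw [lt_div_iff₀ hc, mul_comm z c]
      exact (Real.lt_log_iff_exp_lt h.2).2 hlt
    · intro hz
      refine ⟨h.1, ?_⟩
      rw [lt_div_iff₀ hc] at hz
      exact (Real.lt_log_iff_exp_lt h.2).1 (by rwa [mul_comm z c] at hz)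
  · rw [if_neg h]
    ext z
    simp only [rearr, mem_setOf_eq, mem_empty_iff_false, iff_false, not_and]
    intro hy hlt
    exact h ⟨hy, lt_trans (Real.exp_pos _) hlt⟩

lemma rearr_fiber_integrable {m : ℕ} {c : ℝ} (hc : 0 < c)
    (Ω : Set (EuclideanSpace ℝ (Fin m))) (S : Set (EuclideanSpace ℝ (Fin m) × ℝ))
    (y : EuclideanSpace ℝ (Fin m)) :
    IntegrableOn (fun z => Real.exp (c * z)) {z : ℝ | (y, z) ∈ rearr c Ω S} := by
  rw [rearr_fiber_eq hc Ω S y]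
  split_ifs with h
  · exact exp_mul_integrableOn_Iio hc _
  · simp [IntegrableOn]

lemma rearr_fiber_integral {m : ℕ} {c : ℝ} (hc : 0 < c)
    (Ω : Set (EuclideanSpace ℝ (Fin m))) (S : Set (EuclideanSpace ℝ (Fin m) × ℝ))
    (y : EuclideanSpace ℝ (Fin m)) (hy : y ∈ Ω) :
    (∫ z in {z : ℝ | (y, z) ∈ rearr c Ω S}, Real.exp (c * z)) = fiberWeight c S y := by
  rw [rearr_fiber_eq hc Ω S y]
  by_cases h : 0 < c * fiberWeight c S y
  · rw [if_pos ⟨hy, h⟩, integral_exp_mul_Iio hc,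
      mul_div_cancel₀ _ hc.ne', Real.exp_log h, mul_comm, mul_div_assoc,
      div_self hc.ne', mul_one]
  · have h0 : fiberWeight c S y = 0 := by
      have := fiberWeight_nonneg c S y
      nlinarith [not_lt.1 h]
    rw [if_neg (fun h' => h h'.2), h0]
    simp

lemma indicator_fiber_apply {α β γ : Type*} [Zero γ] (T : Set (α × β)) (f : α × β → γ)
    (y : α) (z : β) :
    T.indicator f (y, z) = ({w | (y, w) ∈ T}).indicator (fun w => f (y, w)) z := by
  by_cases h : (y, z) ∈ T <;> simp [indicator, h]

/-- the exponential rearrangement preserves the weighted volume: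
`∫_{S_ψ} e^{cz} dx = ∫_S e^{cz} dx`, and more generally
`∫_{S_ψ} e^{cz} g(y) dx = ∫_S e^{cz} g(y) dx` for every bounded measurable `g`. -/
theorem rearrangement_preserves_weighted_volume {m : ℕ} (c : ℝ) (hc : 0 < c)
    (Ω : Set (EuclideanSpace ℝ (Fin m))) (hΩo : IsOpen Ω) (hΩb : Bornology.IsBounded Ω)
    (S : Set (EuclideanSpace ℝ (Fin m) × ℝ)) (hS : MeasurableSet S)
    (hSsub : S ⊆ Ω ×ˢ (univ : Set ℝ))
    (hvol : IntegrableOn (fun x => Real.exp (c * x.2)) S)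
    (hpos : 0 < ∫ x in S, Real.exp (c * x.2)) :
    (∫ x in rearr c Ω S, Real.exp (c * x.2)) = (∫ x in S, Real.exp (c * x.2)) ∧
    ∀ g : EuclideanSpace ℝ (Fin m) → ℝ, Measurable g → (∃ K, ∀ y, |g y| ≤ K) →
      (∫ x in rearr c Ω S, Real.exp (c * x.2) * g x.1)
        = (∫ x in S, Real.exp (c * x.2) * g x.1) := by
  classical
  have hΩm : MeasurableSet Ω := hΩo.measurableSet
  have hexp_m : Measurable fun p : EuclideanSpace ℝ (Fin m) × ℝ => Real.exp (c * p.2) :=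
    Real.measurable_exp.comp (measurable_snd.const_mul c)
  -- measurability of fiberWeight
  have hWm : Measurable (fiberWeight c S) := by
    have h1 : StronglyMeasurable (S.indicator fun q : _ × ℝ => Real.exp (c * q.2)) :=
      (hexp_m.indicator hS).stronglyMeasurable
    have h2 : StronglyMeasurable fun y : EuclideanSpace ℝ (Fin m) =>
        ∫ z : ℝ, S.indicator (fun q : _ × ℝ => Real.exp (c * q.2)) (y, z) :=
      h1.integral_prod_right'
    have h3 : fiberWeight c S
        = fun y => ∫ z, S.indicator (fun q : _ × ℝ => Real.exp (c * q.2)) (y, z) := by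
      funext y
      have hfib : MeasurableSet {z : ℝ | (y, z) ∈ S} := measurable_prodMk_left hS
      rw [fiberWeight, ← integral_indicator hfib]
      simp only [indicator_fiber_apply]
    rw [h3]; exact h2.measurable
  have hRm : MeasurableSet (rearr c Ω S) := by
    have : rearr c Ω S
        = (Prod.fst ⁻¹' Ω) ∩ {p | Real.exp (c * p.2) < c * fiberWeight c S p.1} := rfl
    rw [this]
    exact (hΩm.preimage measurable_fst).inter
      (measurableSet_lt hexp_m ((hWm.comp measurable_fst).const_mul c))
  have hW0 : ∀ y ∉ Ω, fiberWeight c S y = 0 := by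
    intro y hy
    have he : {z : ℝ | (y, z) ∈ S} = ∅ := by
      ext z; simp only [mem_setOf_eq, mem_empty_iff_false, iff_false]
      exact fun h => hy (hSsub h).1
    simp [fiberWeight, he]
  have hRfib : ∀ y, (∫ z in {z : ℝ | (y, z) ∈ rearr c Ω S}, Real.exp (c * z))
      = fiberWeight c S y := by
    intro y
    by_cases hy : y ∈ Ω
    · exact rearr_fiber_integral hc Ω S y hy
    · have hempty : {z : ℝ | (y, z) ∈ rearr c Ω S} = ∅ := by
        ext z; simp only [rearr, mem_setOf_eq, mem_empty_iff_false, iff_false, not_and]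
        exact fun h => absurd h hy
      rw [hempty, hW0 y hy]; simp
  -- lintegral computation
  have lint_eq : ∀ T : Set (EuclideanSpace ℝ (Fin m) × ℝ), MeasurableSet T →
      (∀ᵐ y, IntegrableOn (fun z => Real.exp (c * z)) {z | (y, z) ∈ T}) →
      ∫⁻ p in T, ENNReal.ofReal (Real.exp (c * p.2))
        = ∫⁻ y, ENNReal.ofReal (∫ z in {z | (y, z) ∈ T}, Real.exp (c * z)) := by
    intro T hT hfin
    rw [← lintegral_indicator hT, Measure.volume_eq_prod,
      lintegral_prod _ ((hexp_m.ennreal_ofReal.indicator hT).aemeasurable)]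
    refine lintegral_congr_ae ?_
    filter_upwards [hfin] with y hy
    calc ∫⁻ z, T.indicator (fun p => ENNReal.ofReal (Real.exp (c * p.2))) (y, z)
        = ∫⁻ z in {w | (y, w) ∈ T}, ENNReal.ofReal (Real.exp (c * z)) := by
          simp_rw [indicator_fiber_apply]
          rw [lintegral_indicator (show MeasurableSet {w : ℝ | (y, w) ∈ T} from measurable_prodMk_left hT)]
      _ = ENNReal.ofReal (∫ z in {w | (y, w) ∈ T}, Real.exp (c * z)) :=
          (ofReal_integral_eq_lintegral_ofReal hy
            (Filter.Eventually.of_forall fun z => (Real.exp_pos _).le)).symm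
  have hSfib_int : ∀ᵐ y, IntegrableOn (fun z => Real.exp (c * z)) {z : ℝ | (y, z) ∈ S} := by
    have h1 : Integrable (S.indicator fun p : _ × ℝ => Real.exp (c * p.2))
        ((volume : Measure (EuclideanSpace ℝ (Fin m))).prod volume) := by
      rw [← Measure.volume_eq_prod]; exact (integrable_indicator_iff hS).2 hvol
    filter_upwards [h1.prod_right_ae] with y hy
    rw [← integrable_indicator_iff (show MeasurableSet {z : ℝ | (y, z) ∈ S} from measurable_prodMk_left hS)]
    have heq : (fun z => S.indicator (fun p : _ × ℝ => Real.exp (c * p.2)) (y, z))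
        = ({z : ℝ | (y, z) ∈ S}).indicator fun z => Real.exp (c * z) :=
      funext fun z => indicator_fiber_apply _ _ _ _
    rw [← heq]; exact hy
  have hlS := lint_eq S hS hSfib_int
  have hlR := lint_eq (rearr c Ω S) hRm
    (Filter.Eventually.of_forall (rearr_fiber_integrable hc Ω S))
  have hRS : ∫⁻ p in rearr c Ω S, ENNReal.ofReal (Real.exp (c * p.2))
      = ∫⁻ p in S, ENNReal.ofReal (Real.exp (c * p.2)) := by
    rw [hlS, hlR]
    exact lintegral_congr fun y => by rw [hRfib y]; rfl
  -- integrability of the weight on the rearranged set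
  have hvolfin := hvol.2
  rw [hasFiniteIntegral_iff_ofReal
    (Filter.Eventually.of_forall fun p => (Real.exp_pos _).le)] at hvolfin
  have hintR : IntegrableOn (fun p : _ × ℝ => Real.exp (c * p.2)) (rearr c Ω S) := by
    refine ⟨hexp_m.aestronglyMeasurable.restrict, ?_⟩
    rw [hasFiniteIntegral_iff_ofReal
      (Filter.Eventually.of_forall fun p => (Real.exp_pos _).le)]
    exact hRS ▸ hvolfin
  -- the main Fubini computation
  have key : ∀ g : EuclideanSpace ℝ (Fin m) → ℝ, Measurable g → (∃ K, ∀ y, |g y| ≤ K) →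
      ∀ T : Set (EuclideanSpace ℝ (Fin m) × ℝ), MeasurableSet T →
      IntegrableOn (fun p : _ × ℝ => Real.exp (c * p.2)) T →
      (∀ y, (∫ z in {z | (y, z) ∈ T}, Real.exp (c * z)) = fiberWeight c S y) →
      (∫ x in T, Real.exp (c * x.2) * g x.1) = ∫ y, fiberWeight c S y * g y := by
    intro g hg hKex T hT hTi hfib
    obtain ⟨K, hK⟩ := hKex
    have hgint : IntegrableOn (fun p : _ × ℝ => Real.exp (c * p.2) * g p.1) T := by
      have h := hTi.bdd_mul (f := fun p : _ × ℝ => g p.1) (c := K)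
        ((hg.comp measurable_fst).aestronglyMeasurable.restrict)
        (Filter.Eventually.of_forall fun p => by
          simpa [Real.norm_eq_abs] using hK p.1)
      exact h.congr (Filter.Eventually.of_forall fun p => mul_comm _ _)
    have h1 : Integrable (T.indicator fun p : _ × ℝ => Real.exp (c * p.2) * g p.1)
        ((volume : Measure (EuclideanSpace ℝ (Fin m))).prod volume) := by
      rw [← Measure.volume_eq_prod]; exact (integrable_indicator_iff hT).2 hgint
    rw [← integral_indicator hT, Measure.volume_eq_prod, integral_prod _ h1]
    congr 1; funext y
    calc ∫ z, T.indicator (fun p : _ × ℝ => Real.exp (c * p.2) * g p.1) (y, z)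
        = ∫ z in {w | (y, w) ∈ T}, Real.exp (c * z) * g y := by
          simp_rw [indicator_fiber_apply]
          rw [integral_indicator (show MeasurableSet {w : ℝ | (y, w) ∈ T} from measurable_prodMk_left hT)]
      _ = (∫ z in {w | (y, w) ∈ T}, Real.exp (c * z)) * g y := integral_mul_const _ _
      _ = fiberWeight c S y * g y := by rw [hfib y]
  constructor
  · have h1 := key (fun _ => 1) measurable_const ⟨1, fun _ => by norm_num⟩
    have e1 := h1 S hS hvol fun y => rfl
    have e2 := h1 (rearr c Ω S) hRm hintR hRfib
    simpa using e2.trans e1.symm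
  · intro g hg hKex
    exact (key g hg hKex (rearr c Ω S) hRm hintR hRfib).trans
      (key g hg hKex S hS hvol fun y => rfl).symm
end
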